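/- The map sending the coefficients of a monic complex polynomial of degree n to its multiset of roots (with multiplicity) is a homeomorphism from ℂⁿ onto the space ℂⁿ/Sₙ of unordered n-tuples of complex numbers with the quotient topology. -/

import Mathlib

open Polynomial

namespace CRH

noncomputable section

variable {n : ℕ}

/-- The product polynomial with given roots. -/
def P (v : Fin n → ℂ) : ℂ[X] := ∏ j, (X - C (v j))

lemma P_eq_multiset (v : Fin n → ℂ) :
    P v = ((Finset.univ.val.map v).map fun a => X - C a).prod := by
  rw [P, Finset.prod, Multiset.map_map]; rfl

lemma P_monic (v : Fin n → ℂ) : (P v).Monic :=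
  monic_prod_of_monic _ _ fun j _ => monic_X_sub_C (v j)

lemma P_natDegree (v : Fin n → ℂ) : (P v).natDegree = n := by
  rw [P, natDegree_prod _ _ fun j _ => X_sub_C_ne_zero (v j)]
  simp

lemma P_roots (v : Fin n → ℂ) : (P v).roots = Finset.univ.val.map v := by
  rw [P_eq_multiset, roots_multiset_prod_X_sub_C]

/-- The coefficients map. -/
def ψ (n : ℕ) : (Fin n → ℂ) → (Fin n → ℂ) := fun v i => (P v).coeff i

/-- Any monic polynomial of `natDegree n` decomposes. -/
lemma monic_decomp {p : ℂ[X]} (hm : p.Monic) (hd : p.natDegree = n) :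
    p = X ^ n + ∑ i : Fin n, C (p.coeff i) * X ^ (i : ℕ) := by
  conv_lhs => rw [p.as_sum_range_C_mul_X_pow]
  rw [hd, Finset.sum_range_succ, Fin.sum_univ_eq_sum_range (fun i => C (p.coeff i) * X ^ i)]
  have : p.coeff n = 1 := by
    have := hm.coeff_natDegree
    rwa [hd] at this
  rw [this, map_one, one_mul, add_comm]

lemma key_eq (v : Fin n → ℂ) :
    X ^ n + ∑ i : Fin n, C (ψ n v i) * X ^ (i : ℕ) = P v :=
  (monic_decomp (P_monic v) (P_natDegree v)).symm

/-- Equal multisets of values gives a permutation. -/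
lemma exists_perm {α : Type*} {f g : Fin n → α}
    (h : Finset.univ.val.map f = Finset.univ.val.map g) :
    ∃ σ : Equiv.Perm (Fin n), f ∘ σ = g := by
  classical
  have hcard : ∀ c, Fintype.card {i // g i = c} = Fintype.card {i // f i = c} := by
    intro c
    have hc := congrArg (Multiset.count c) h
    rw [Multiset.count_map, Multiset.count_map] at hc
    simp only [Fintype.card_subtype]
    have h1 : ∀ (u : Fin n → α), (Finset.univ.filter fun i => u i = c).card
        = Multiset.card (Finset.univ.val.filter fun a => c = u a) := by
      intro u
      rw [Finset.card, Finset.filter_val]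
      congr 1
      exact Multiset.filter_congr (fun a _ => by simp [eq_comm])
    rw [h1, h1, hc]
  let e : ∀ c, {i // g i = c} ≃ {i // f i = c} := fun c => Fintype.equivOfCardEq (hcard c)
  exact ⟨Equiv.ofFiberEquiv e, funext fun i => Equiv.ofFiberEquiv_map e i⟩

lemma psi_invariant : ∀ (a b : Fin n → ℂ),
    (MulAction.orbitRel (DomMulAct (Equiv.Perm (Fin n))) (Fin n → ℂ)).r a b → ψ n a = ψ n b := by
  rintro _ b ⟨g, rfl⟩
  funext i
  simp only [ψ, P]
  congr 1
  refine Finset.prod_congr rfl ?_ |>.trans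
    (Equiv.prod_comp (DomMulAct.mk.symm g) (fun x => X - C (b x)))
  intro j _
  rfl

/-- The descended map. -/
def Φ (n : ℕ) : Quotient (MulAction.orbitRel (DomMulAct (Equiv.Perm (Fin n))) (Fin n → ℂ))
    → (Fin n → ℂ) :=
  Quotient.lift (ψ n) psi_invariant

lemma Φ_injective : Function.Injective (Φ n) := by
  rintro ⟨v⟩ ⟨w⟩ h
  have hψ : ψ n v = ψ n w := h
  have hP : P v = P w := by
    rw [← key_eq v, ← key_eq w, hψ]
  have hroots : Finset.univ.val.map v = Finset.univ.val.map w := by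
    rw [← P_roots, ← P_roots, hP]
  obtain ⟨σ, hσ⟩ := exists_perm hroots
  refine Quotient.sound ⟨DomMulAct.mk σ⁻¹, ?_⟩
  funext i
  show w (σ⁻¹ i) = v i
  have := congrFun hσ (σ⁻¹ i)
  simpa using this.symm

/-- Surjectivity, with the explicit factorization. -/
lemma psi_surj (a : Fin n → ℂ) :
    ∃ v : Fin n → ℂ, ψ n v = a ∧
      (X ^ n + ∑ i : Fin n, C (a i) * X ^ (i : ℕ) : ℂ[X]) = ∏ i : Fin n, (X - C (v i)) := by
  classical
  set p : ℂ[X] := X ^ n + ∑ i : Fin n, C (a i) * X ^ (i : ℕ) with hp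
  have hdeg : (∑ i : Fin n, C (a i) * X ^ (i : ℕ) : ℂ[X]).degree < n := by
    apply lt_of_le_of_lt (Polynomial.degree_sum_le _ _)
    rw [Finset.sup_lt_iff (by exact_mod_cast WithBot.bot_lt_coe n)]
    intro i _
    apply lt_of_le_of_lt (degree_C_mul_X_pow_le _ _)
    exact_mod_cast i.isLt
  have hm : p.Monic := monic_X_pow_add hdeg
  have hnd : p.natDegree = n := by
    have : p.degree = n := by
      rw [hp, degree_add_eq_left_of_degree_lt (by rwa [degree_X_pow]), degree_X_pow]
    exact natDegree_eq_of_degree_eq_some this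
  have hsplit : p.Splits := IsAlgClosed.splits p
  have hcard : Multiset.card p.roots = n := by
    rw [splits_iff_card_roots.mp hsplit, hnd]
  have hlen : p.roots.toList.length = n := by
    rw [Multiset.length_toList, hcard]
  set v : Fin n → ℂ := fun i => p.roots.toList.get (Fin.cast hlen.symm i) with hv
  have hmap : Finset.univ.val.map v = p.roots := by
    rw [Fin.univ_val_map]
    have : List.ofFn v = p.roots.toList := by
      apply List.ext_get (by simp [hlen])
      intro i h1 h2
      simp [hv]
    rw [this, Multiset.coe_toList]
  have hPv : P v = p := by
    rw [P_eq_multiset, hmap]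
    exact (hsplit.eq_prod_roots_of_monic hm).symm
  have hcoeff : ψ n v = a := by
    funext i
    show (P v).coeff i = a i
    rw [hPv, hp]
    rw [coeff_add, coeff_X_pow, if_neg (by exact_mod_cast i.isLt.ne), zero_add,
      finset_sum_coeff]
    simp only [coeff_C_mul, coeff_X_pow]
    rw [Finset.sum_eq_single i (fun j _ hj => by
      rw [if_neg (fun hcc => hj (Fin.val_injective hcc.symm)), mul_zero]) (by simp)]
    simp
  refine ⟨v, hcoeff, ?_⟩
  rw [← hPv]; rfl


lemma psi_formula (v : Fin n → ℂ) (i : Fin n) :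
    ψ n v i = (-1) ^ (n - (i : ℕ)) *
      ∑ t ∈ Finset.univ.powersetCard (n - (i : ℕ)), t.prod v := by
  have hcard : Multiset.card (Finset.univ.val.map v) = n := by simp
  have hle : (i : ℕ) ≤ Multiset.card (Finset.univ.val.map v) := by
    rw [hcard]; exact i.isLt.le
  show (P v).coeff i = _
  rw [P_eq_multiset, Multiset.prod_X_sub_C_coeff _ hle, hcard,
    Finset.esymm_map_val]

lemma psi_continuous : Continuous (ψ n) := by
  apply continuous_pi
  intro i
  have : (fun v => ψ n v i) = fun v : Fin n → ℂ => (-1) ^ (n - (i : ℕ)) *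
      ∑ t ∈ Finset.univ.powersetCard (n - (i : ℕ)), t.prod v :=
    funext fun v => psi_formula v i
  rw [this]
  exact continuous_const.mul (continuous_finset_sum _ fun t _ =>
    continuous_finset_prod _ fun j _ => continuous_apply j)

lemma root_bound {z : ℂ} {a : Fin n → ℂ} (hz : z ^ n + ∑ i : Fin n, a i * z ^ (i : ℕ) = 0) :
    ‖z‖ ≤ 1 + ∑ i, ‖a i‖ := by
  by_cases h1 : ‖z‖ ≤ 1
  · exact h1.trans (le_add_of_nonneg_right (Finset.sum_nonneg fun i _ => norm_nonneg _))
  push_neg at h1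
  have hn : n ≠ 0 := by rintro rfl; simp at hz
  have hzn : z ^ n = -∑ i : Fin n, a i * z ^ (i : ℕ) := by linear_combination hz
  have hpow : ‖z‖ ^ n ≤ (∑ i, ‖a i‖) * ‖z‖ ^ (n - 1) := by
    calc ‖z‖ ^ n = ‖z ^ n‖ := (norm_pow z n).symm
      _ = ‖∑ i : Fin n, a i * z ^ (i : ℕ)‖ := by rw [hzn, norm_neg]
      _ ≤ ∑ i : Fin n, ‖a i‖ * ‖z‖ ^ (i : ℕ) := by
          refine (norm_sum_le _ _).trans (Finset.sum_le_sum fun i _ => ?_)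
          rw [norm_mul, norm_pow]
      _ ≤ ∑ i : Fin n, ‖a i‖ * ‖z‖ ^ (n - 1) :=
          Finset.sum_le_sum fun i _ => mul_le_mul_of_nonneg_left
            (pow_le_pow_right₀ h1.le (by omega)) (norm_nonneg _)
      _ = (∑ i, ‖a i‖) * ‖z‖ ^ (n - 1) := by rw [Finset.sum_mul]
  have hzpos : (0 : ℝ) < ‖z‖ ^ (n - 1) := pow_pos (lt_trans one_pos h1) _
  have hsplit : ‖z‖ ^ n = ‖z‖ * ‖z‖ ^ (n - 1) := by
    rw [← pow_succ']
    congr 1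
    omega
  rw [hsplit] at hpow
  have := le_of_mul_le_mul_right hpow hzpos
  linarith

lemma root_of_P (v : Fin n → ℂ) (j : Fin n) :
    (v j) ^ n + ∑ i : Fin n, ψ n v i * (v j) ^ (i : ℕ) = 0 := by
  have h0 : (P v).eval (v j) = 0 := by
    rw [P]
    rw [Polynomial.eval_prod]
    exact Finset.prod_eq_zero (Finset.mem_univ j) (by simp)
  have := congrArg (Polynomial.eval (v j)) (key_eq v)
  rw [h0] at this
  rw [← this]
  rw [Polynomial.eval_add, Polynomial.eval_pow, Polynomial.eval_X, Polynomial.eval_finset_sum]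
  simp

lemma psi_isProperMap : IsProperMap (ψ n) := by
  rw [isProperMap_iff_isCompact_preimage]
  refine ⟨psi_continuous, fun K hK => ?_⟩
  obtain ⟨R, hR⟩ := hK.isBounded.subset_closedBall 0
  set M : ℝ := 1 + n * max R 0 with hM
  have hM0 : 0 ≤ M := by positivity
  refine (isCompact_closedBall (0 : Fin n → ℂ) M).of_isClosed_subset
    (hK.isClosed.preimage psi_continuous) ?_
  intro v hv
  rw [Metric.mem_closedBall, dist_zero_right]
  rw [pi_norm_le_iff_of_nonneg hM0]
  intro j
  have hb : ∀ i : Fin n, ‖ψ n v i‖ ≤ max R 0 := by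
    intro i
    refine (norm_le_pi_norm (ψ n v) i).trans ?_
    have := hR hv
    rw [Metric.mem_closedBall, dist_zero_right] at this
    exact this.trans (le_max_left _ _)
  have := root_bound (root_of_P v j)
  refine this.trans ?_
  rw [hM]
  have : ∑ i, ‖ψ n v i‖ ≤ ∑ _i : Fin n, max R 0 :=
    Finset.sum_le_sum fun i _ => hb i
  simp only [Finset.sum_const, Finset.card_univ, Fintype.card_fin, nsmul_eq_mul] at this
  linarith

lemma Φ_continuous : Continuous (Φ n) := psi_continuous.quotient_lift _

lemma Φ_isClosedMap : IsClosedMap (Φ n) := by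
  intro C hC
  have himg : Φ n '' C = ψ n '' (Quotient.mk _ ⁻¹' C) := by
    ext x
    constructor
    · rintro ⟨q, hq, rfl⟩
      obtain ⟨v, rfl⟩ := Quotient.exists_rep q
      exact ⟨v, hq, rfl⟩
    · rintro ⟨v, hv, rfl⟩
      exact ⟨Quotient.mk _ v, hv, rfl⟩
  rw [himg]
  exact psi_isProperMap.isClosedMap _ (hC.preimage continuous_quotient_mk')

lemma Φ_surjective : Function.Surjective (Φ n) := fun a => by
  obtain ⟨v, hv, -⟩ := psi_surj a
  exact ⟨Quotient.mk _ v, hv⟩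

/-- The underlying equivalence. -/
def E (n : ℕ) : Quotient (MulAction.orbitRel (DomMulAct (Equiv.Perm (Fin n))) (Fin n → ℂ))
    ≃ (Fin n → ℂ) :=
  Equiv.ofBijective (Φ n) ⟨Φ_injective, Φ_surjective⟩

/-- The homeomorphism. -/
def H (n : ℕ) : Quotient (MulAction.orbitRel (DomMulAct (Equiv.Perm (Fin n))) (Fin n → ℂ))
    ≃ₜ (Fin n → ℂ) where
  toEquiv := E n
  continuous_toFun := Φ_continuous
  continuous_invFun := by
    rw [continuous_iff_isClosed]
    intro C hC
    show IsClosed ((E n).symm ⁻¹' C)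
    rw [(Equiv.image_eq_preimage_symm _ _).symm]
    exact Φ_isClosedMap C hC

end

end CRH

open CRH in
/-- The map sending the coefficients of a monic complex polynomial of
degree `n` to its multiset of roots is a homeomorphism from `ℂⁿ` onto `ℂⁿ/Sₙ`
(unordered `n`-tuples with the quotient topology). -/
theorem coeffs_to_roots_homeomorph (n : ℕ) :
    ∃ h : (Fin n → ℂ) ≃ₜ
      Quotient (MulAction.orbitRel (DomMulAct (Equiv.Perm (Fin n))) (Fin n → ℂ)),
      ∀ a : Fin n → ℂ, ∃ v : Fin n → ℂ,
        h a = Quotient.mk _ v ∧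
        (X ^ n + ∑ i : Fin n, C (a i) * X ^ (i : ℕ) : ℂ[X]) =
          ∏ i : Fin n, (X - C (v i)) := by
  refine ⟨(H n).symm, fun a => ?_⟩
  obtain ⟨v, hv, hfact⟩ := psi_surj a
  refine ⟨v, ?_, hfact⟩
  show (E n).symm a = Quotient.mk _ v
  rw [Equiv.symm_apply_eq]
  exact hv.symm
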